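/- Let N = 2 and let R be the additive subgroup of (Fin 6 → ZMod 2) generated by the two rows (1,1,1,1,0,0) and (0,0,1,1,1,1). Then S(R) = 3, i.e. S(R) = s − 3 for s = 6. (This is the verification that the third genus-3 family of Table 1, with Galois group Z/2 × Z/2, N = 2 and monodromy data {(1,0),(1,0),(1,1),(1,1),(0,1),(0,1)}, generates a Shimura subvariety: dim S(G) = s − 3.) -/

import Mathlib

open Finset

/-- `paperD N α = −1 + (1/N)·∑_j val(−α_j)` : the dimension `d(α)` of the eigenspace of
holomorphic differentials with local monodromy data `α` (Proposition 2.2.3). -/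
noncomputable def paperD {s : ℕ} (N : ℕ) (α : Fin s → ZMod N) : ℚ :=
  -1 + (1 / (N : ℚ)) * ∑ j, (((-α j).val : ℚ))

/-- `paperS R` : the dimension of the PEL Shimura subvariety `S(G)` attached to a family of
abelian covers with character data the finite additive subgroup `R` (Lemma 2.2.1):
`S(R) = (1/2)·∑_{α ∈ R, 2α ≠ 0} d(α)d(−α) + (1/2)·∑_{α ∈ R, α ≠ 0, 2α = 0} d(α)(d(α)+1)`. -/
noncomputable def paperS {s N : ℕ} [NeZero N] (R : AddSubgroup (Fin s → ZMod N)) : ℚ :=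
  (1 / 2) * ∑ α ∈ ((R : Set (Fin s → ZMod N)).toFinite.toFinset.filter fun α => 2 • α ≠ 0),
      paperD N α * paperD N (-α)
  + (1 / 2) * ∑ α ∈ ((R : Set (Fin s → ZMod N)).toFinite.toFinset.filter
        fun α => α ≠ 0 ∧ 2 • α = 0),
      paperD N α * (paperD N α + 1)

abbrev rowA : Fin 6 → ZMod 2 := ![1, 1, 1, 1, 0, 0]
abbrev rowB : Fin 6 → ZMod 2 := ![0, 0, 1, 1, 1, 1]

def Rgrp : AddSubgroup (Fin 6 → ZMod 2) where
  carrier := {0, rowA, rowB, rowA + rowB}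
  zero_mem' := by left; rfl
  add_mem' := by
    intro x y hx hy
    simp only [Set.mem_insert_iff, Set.mem_singleton_iff] at hx hy ⊢
    rcases hx with h|h|h|h <;> rcases hy with h'|h'|h'|h' <;> subst h <;> subst h' <;> decide
  neg_mem' := by
    intro x hx
    simp only [Set.mem_insert_iff, Set.mem_singleton_iff] at hx ⊢
    rcases hx with h|h|h|h <;> subst h <;> decide

lemma mem_Rgrp (x : Fin 6 → ZMod 2) :
    x ∈ Rgrp ↔ x = 0 ∨ x = rowA ∨ x = rowB ∨ x = rowA + rowB := Iff.rfl

lemma closure_eq : AddSubgroup.closure {rowA, rowB} = Rgrp := by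
  apply le_antisymm
  · rw [AddSubgroup.closure_le]
    intro x hx
    rcases hx with h|h <;> subst h <;> simp [mem_Rgrp]
  · intro x hx
    rw [mem_Rgrp] at hx
    rcases hx with h|h|h|h
    · subst h; exact zero_mem _
    · subst h; exact AddSubgroup.subset_closure (by left; rfl)
    · subst h; exact AddSubgroup.subset_closure (by right; rfl)
    · subst h
      exact add_mem (AddSubgroup.subset_closure (by left; rfl))
        (AddSubgroup.subset_closure (by right; rfl))


/-- Table 1, third genus-3 family: `G = ℤ/2 × ℤ/2`, `N = 2`, monodromy data
`{(1,0),(1,0),(1,1),(1,1),(0,1),(0,1)}` (rows `(1,1,1,1,0,0)` and `(0,0,1,1,1,1)`):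
`S(R) = 3 = s − 3`. -/
theorem table1_genus3_third :
    paperS (AddSubgroup.closure
      {(![1, 1, 1, 1, 0, 0] : Fin 6 → ZMod 2), ![0, 0, 1, 1, 1, 1]}) = 3 := by
  have hcl : AddSubgroup.closure {(![1, 1, 1, 1, 0, 0] : Fin 6 → ZMod 2), ![0, 0, 1, 1, 1, 1]}
      = Rgrp := closure_eq
  rw [hcl]
  have hfin : ((Rgrp : Set (Fin 6 → ZMod 2)).toFinite.toFinset)
      = ({0, rowA, rowB, rowA + rowB} : Finset (Fin 6 → ZMod 2)) := by
    ext x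
    simp only [Set.Finite.mem_toFinset, SetLike.mem_coe, mem_Rgrp, Finset.mem_insert,
      Finset.mem_singleton]
  rw [paperS, hfin]
  have h2 : ∀ α : Fin 6 → ZMod 2, 2 • α = 0 := by decide
  rw [Finset.filter_false_of_mem (fun α _ h => h (h2 α))]
  rw [show Finset.filter (fun α => α ≠ 0 ∧ 2 • α = 0)
      ({0, rowA, rowB, rowA + rowB} : Finset (Fin 6 → ZMod 2))
      = {rowA, rowB, rowA + rowB} by decide]
  rw [Finset.sum_insert (by decide), Finset.sum_insert (by decide), Finset.sum_singleton]
  have hval0 : ∀ a : ZMod 2, ((-a).val : ℚ) = if a = 1 then 1 else 0 := by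
    intro a
    have h : (-a).val = if a = 1 then 1 else 0 := by revert a; decide
    rw [h]; split_ifs <;> simp
  have hval : ∀ x : Fin 6 → ZMod 2, ∀ j, ((-x j).val : ℚ) = if x j = 1 then 1 else 0 :=
    fun x j => hval0 (x j)
  have key : ∀ x : Fin 6 → ZMod 2, paperD 2 x = -1 + (1/2) * ∑ j, (if x j = 1 then (1:ℚ) else 0) := by
    intro x
    simp only [paperD, hval]
    norm_num
  have hA : paperD 2 rowA = 1 := by
    rw [key]
    norm_num [show #(Finset.filter (fun x => rowA x = 1) Finset.univ) = 4 from by decide]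
  have hB : paperD 2 rowB = 1 := by
    rw [key]
    norm_num [show #(Finset.filter (fun x => rowB x = 1) Finset.univ) = 4 from by decide]
  have hAB : paperD 2 (rowA + rowB) = 1 := by
    rw [show rowA + rowB = ![1,1,0,0,1,1] from by decide, key]
    norm_num [show #(Finset.filter (fun x => (![1,1,0,0,1,1] : Fin 6 → ZMod 2) x = 1)
      Finset.univ) = 4 from by decide]
  rw [hA, hB, hAB]
  norm_num
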